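/- Let a be a finite-dimensional real inner product space, R a reduced root system in the dual a* with basis Π. Define a^{*+} = {x ∈ a* : ⟨x, α^∨⟩ ≥ 0 for all α ∈ Π}. Then the antidual cone {λ ∈ a : ⟨x, λ⟩ ≤ 0 for all x ∈ a^{*+}} equals the set of nonpositive linear combinations {Σ_{α∈Π} λ_α α^∨ : λ_α ≤ 0}. -/

import Mathlib

/-!
STATEMENT 2: For a reduced root system R with basis Π in a*, the antidual of the
positive chamber a^{*+} = {x : ⟨x, α^∨⟩ ≥ 0 ∀ α ∈ Π}, namely
{λ ∈ a : ⟨x, λ⟩ ≤ 0 ∀ x ∈ a^{*+}}, equals {Σ_{α∈Π} λ_α α^∨ : λ_α ≤ 0}.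
-/

open scoped RealInnerProductSpace

noncomputable section

variable {E : Type*} [NormedAddCommGroup E] [InnerProductSpace ℝ E] [FiniteDimensional ℝ E]

/-- The coroot `α^∨ = 2α/⟨α,α⟩`. -/
def coroot (α : E) : E := (2 / ⟪α, α⟫) • α

theorem stmt2
    (R Pi : Finset E) (hPiR : ↑Pi ⊆ (R : Set E)) (h0 : (0 : E) ∉ R)
    (hred : ∀ β ∈ R, ∀ t : ℝ, t • β ∈ R → t = 1 ∨ t = -1)
    (hcrys : ∀ α ∈ R, ∀ β ∈ R, ∃ n : ℤ, ⟪β, coroot α⟫ = (n : ℝ))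
    (hbasis : ∀ β ∈ R, (∃ c : E → ℝ, (∀ α, 0 ≤ c α) ∧ β = ∑ α ∈ Pi, c α • α) ∨
                       (∃ c : E → ℝ, (∀ α, c α ≤ 0) ∧ β = ∑ α ∈ Pi, c α • α))
    (hindep : LinearIndependent ℝ (fun x : {x // x ∈ Pi} => (x : E))) :
    {lam : E | ∀ x : E, (∀ α ∈ Pi, 0 ≤ ⟪x, coroot α⟫) → ⟪x, lam⟫ ≤ 0}
    = {lam : E | ∃ c : E → ℝ, (∀ α ∈ Pi, c α ≤ 0) ∧ lam = ∑ α ∈ Pi, c α • coroot α} := by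
  classical
  ext lam
  simp only [Set.mem_setOf_eq]
  constructor
  · intro hlam
    -- the family of coroots indexed by Pi
    set ι := {x // x ∈ Pi}
    set v : ι → E := fun i => coroot (i : E) with hv_def
    have hne : ∀ i : ι, (2 / ⟪(i : E), (i : E)⟫) ≠ 0 := by
      intro i
      have hiR : (i : E) ∈ R := hPiR i.2
      have hiz : (i : E) ≠ 0 := fun h => h0 (h ▸ hiR)
      have hpos : ⟪(i : E), (i : E)⟫ ≠ 0 := inner_self_ne_zero.2 hiz
      exact div_ne_zero two_ne_zero hpos
    have hv : LinearIndependent ℝ v := by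
      have h := hindep.units_smul (fun i => Units.mk0 _ (hne i))
      have he : v = (fun i : ι => Units.mk0 _ (hne i)) • (fun x : ι => (x : E)) := by
        funext i
        simp [hv_def, coroot, Units.smul_def]
      rw [he]
      exact h
    set S := Submodule.span ℝ (Set.range v) with hS_def
    have hmemS : ∀ i : ι, v i ∈ S := fun i => Submodule.subset_span ⟨i, rfl⟩
    -- orthogonal decomposition of lam
    set p : E := (S.orthogonalProjectionOnto lam : E) with hp_def
    have hpS : p ∈ S := (S.orthogonalProjectionOnto lam).2
    have hq : lam - p ∈ Sᗮ := Submodule.sub_starProjection_mem_orthogonal (K := S) lam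
    set q : E := lam - p with hq_def
    have hq_inner : ∀ i : ι, ⟪q, v i⟫ = 0 := fun i => by
      rw [real_inner_comm]; exact hq (v i) (hmemS i)
    have hq0 : q = 0 := by
      have h1 : ⟪q, lam⟫ ≤ 0 := by
        apply hlam q
        intro α hα
        rw [show coroot α = v ⟨α, hα⟩ from rfl, hq_inner ⟨α, hα⟩]
      have h2 : ⟪-q, lam⟫ ≤ 0 := by
        apply hlam (-q)
        intro α hα
        rw [show coroot α = v ⟨α, hα⟩ from rfl, inner_neg_left, hq_inner ⟨α, hα⟩, neg_zero]
      have h3 : ⟪q, lam⟫ = 0 := le_antisymm h1 (by rwa [inner_neg_left, neg_nonpos] at h2)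
      have h4 : ⟪q, p⟫ = 0 := by rw [real_inner_comm]; exact hq p hpS
      have h5 : ⟪q, q⟫ = 0 := by
        have : lam = p + q := by rw [hq_def]; abel
        rw [this, inner_add_right, h4, zero_add] at h3
        exact h3
      exact inner_self_eq_zero.1 h5
    have hlamS : lam ∈ S := by
      have : lam = p := by
        have := hq0
        rw [hq_def, sub_eq_zero] at this
        exact this
      rw [this]; exact hpS
    -- basis of S from the coroots
    set b : Module.Basis ι ℝ S := Module.Basis.span hv with hb_def
    have hb_apply : ∀ i : ι, ((b i : S) : E) = v i := fun i => congrArg Subtype.val (Module.Basis.span_apply hv i)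
    set l : S := ⟨lam, hlamS⟩ with hl_def
    set c0 : ι → ℝ := fun i => b.repr l i with hc0_def
    have hsum : lam = ∑ i : ι, c0 i • v i := by
      have := b.sum_repr l
      have h := congrArg (Subtype.val) this
      rw [show (l : E) = lam from rfl] at h
      rw [← h]
      push_cast
      refine Finset.sum_congr rfl fun i _ => ?_
      rw [← hb_apply i]
    -- dual vectors extracting coefficients
    have hdual : ∀ i : ι, ∃ w : E, (∀ j : ι, ⟪w, v j⟫ = if i = j then 1 else 0) := by
      intro i
      set f : S →L[ℝ] ℝ := LinearMap.toContinuousLinearMap (b.coord i) with hf_def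
      set wS : S := (InnerProductSpace.toDual ℝ S).symm f with hw_def
      refine ⟨(wS : E), fun j => ?_⟩
      have h1 : ⟪(wS : E), ((b j : S) : E)⟫ = ⟪wS, (b j : S)⟫ := rfl
      rw [← hb_apply j, h1, hw_def, InnerProductSpace.toDual_symm_apply, hf_def]
      simp [Module.Basis.coord_apply, Module.Basis.repr_self, Finsupp.single_apply, eq_comm]
    choose w hw using hdual
    have hcoeff : ∀ i : ι, c0 i ≤ 0 := by
      intro i
      have h1 : ∀ α ∈ Pi, 0 ≤ ⟪w i, coroot α⟫ := by
        intro α hα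
        rw [show coroot α = v ⟨α, hα⟩ from rfl, hw i ⟨α, hα⟩]
        split <;> norm_num
      have h2 := hlam (w i) h1
      rw [hsum, inner_sum] at h2
      have h3 : ∀ j : ι, ⟪w i, c0 j • v j⟫ = if i = j then c0 j else 0 := by
        intro j
        rw [real_inner_smul_right, hw i j]
        split <;> ring
      rw [Finset.sum_congr rfl (fun j _ => h3 j), Finset.sum_ite_eq (Finset.univ) i c0] at h2
      simpa using h2
    -- assemble the coefficient function on E
    refine ⟨fun α => if h : α ∈ Pi then c0 ⟨α, h⟩ else 0, fun α hα => by simp [hα, hcoeff], ?_⟩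
    rw [hsum, ← Finset.sum_coe_sort Pi]
    refine Finset.sum_congr rfl fun i _ => ?_
    simp [i.2]
    rfl
  · rintro ⟨c, hc, rfl⟩
    intro x hx
    rw [inner_sum]
    refine Finset.sum_nonpos fun α hα => ?_
    rw [real_inner_smul_right]
    exact mul_nonpos_of_nonpos_of_nonneg (hc α hα) (hx α hα)

end
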